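/- For any tuples of positive integers (k₁,…,k_r), (l₁,…,l_s) and any positive integer M, Σ_{0<m₁<⋯<m_r, 0<n₁<⋯<n_s, m_r+n_s<M} 1/(m₁^{k₁}⋯m_r^{k_r} n₁^{l₁}⋯n_s^{l_s}) = Z_M(z_{(k₁,…,k_r)} ⧢ z_{(l₁,…,l_s)}), where Z_M is the ℚ-linear map on the free noncommutative algebra with Z_M(z_{(h₁,…,h_u)}) = Σ_{0<n₁<⋯<n_u<M} 1/(n₁^{h₁}⋯n_u^{h_u}) and ⧢ is the shuffle product. -/

import Mathlib

/-- The shuffle product of two words, as a multiset of words. -/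
def shuffle {α : Type*} : List α → List α → Multiset (List α)
  | [], ys => {ys}
  | x :: xs, [] => {x :: xs}
  | x :: xs, y :: ys =>
      ((shuffle xs (y :: ys)).map (fun w => x :: w))
        + ((shuffle (x :: xs) ys).map (fun w => y :: w))
termination_by xs ys => xs.length + ys.length

/-- `zetaMrev M [k_r, …, k_1] = Σ_{0<n₁<⋯<n_r<M} 1/(n₁^{k₁}⋯n_r^{k_r})`
(the index is given in reversed order). -/
def zetaMrev : ℕ → List ℕ → ℚ
  | _, [] => 1
  | M, k :: ks => ∑ n ∈ Finset.Ioo 0 M, zetaMrev n ks / (n : ℚ) ^ k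

/-- The truncated MZV `ζ_M(k₁,…,k_r)`. -/
def zetaM (M : ℕ) (ks : List ℕ) : ℚ := zetaMrev M ks.reverse

/-- Recover the index `(k₁,…,k_r)` from the word `z_{k₁}⋯z_{k_r}` over the
alphabet `{x,y}` (with `true = y`, `false = x`). -/
def toIndex (w : List Bool) : List ℕ :=
  w.foldl (fun acc b => if b then acc ++ [1] else acc.dropLast ++ [acc.getLastD 0 + 1]) []

/-- The word `z_{k₁}⋯z_{k_r} = (y x^{k₁-1})⋯(y x^{k_r-1})` (`true = y`, `false = x`). -/
def wordOf (ks : List ℕ) : List Bool :=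
  ks.foldr (fun k acc => (true :: List.replicate (k - 1) false) ++ acc) []

/-- `lastFixed a [k_r,…,k_1] = Σ_{0<m₁<⋯<m_r = a} 1/(m₁^{k₁}⋯m_r^{k_r})`
(sum with the largest summation variable fixed equal to `a`). -/
def lastFixed : ℕ → List ℕ → ℚ
  | a, [] => if a = 0 then 1 else 0
  | a, k :: ks => if 0 < a then zetaMrev a ks / (a : ℚ) ^ k else 0




lemma shuffle_nil_left {α : Type*} (ys : List α) : shuffle [] ys = {ys} := by
  rw [shuffle]

lemma shuffle_nil_right {α : Type*} (xs : List α) : shuffle xs [] = {xs} := by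
  cases xs <;> rw [shuffle]

lemma shuffle_cons_cons {α : Type*} (x y : α) (xs ys : List α) :
    shuffle (x :: xs) (y :: ys)
      = ((shuffle xs (y :: ys)).map (fun w => x :: w))
        + ((shuffle (x :: xs) ys).map (fun w => y :: w)) := by
  rw [shuffle]

lemma shuffle_snoc {α : Type*} : ∀ (n : ℕ) (xs ys : List α) (a b : α),
    xs.length + ys.length ≤ n →
    shuffle (xs ++ [a]) (ys ++ [b])
      = ((shuffle xs (ys ++ [b])).map (fun w => w ++ [a]))
        + ((shuffle (xs ++ [a]) ys).map (fun w => w ++ [b])) := by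
  intro n
  induction n with
  | zero =>
    intro xs ys a b h
    have hxs : xs = [] := by cases xs <;> simp_all
    have hys : ys = [] := by cases ys <;> simp_all
    subst hxs; subst hys
    simp [shuffle_cons_cons, shuffle_nil_left, shuffle_nil_right]
    exact Multiset.cons_swap _ _ _
  | succ n ih =>
    intro xs ys a b h
    match xs, ys with
    | [], [] =>
      simp [shuffle_cons_cons, shuffle_nil_left, shuffle_nil_right]
      exact Multiset.cons_swap _ _ _
    | [], y :: ys' =>
      have e1 : shuffle ([] ++ [a]) (ys' ++ [b])
          = ((shuffle [] (ys' ++ [b])).map (fun w => w ++ [a]))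
            + ((shuffle ([] ++ [a]) ys').map (fun w => w ++ [b])) :=
        ih [] ys' a b (by simp at h ⊢; omega)
      simp only [List.nil_append] at e1 ⊢
      simp [shuffle_cons_cons, shuffle_nil_left, e1, Multiset.map_map, Function.comp]
      exact Multiset.cons_swap _ _ _
    | x :: xs', [] =>
      have e1 : shuffle (xs' ++ [a]) ([] ++ [b])
          = ((shuffle xs' ([] ++ [b])).map (fun w => w ++ [a]))
            + ((shuffle (xs' ++ [a]) []).map (fun w => w ++ [b])) :=
        ih xs' [] a b (by simp at h ⊢; omega)
      simp only [List.nil_append] at e1 ⊢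
      simp [shuffle_cons_cons, shuffle_nil_right, e1, Multiset.map_map, Function.comp]
      rw [add_assoc, add_assoc, add_comm ({x :: (xs' ++ [a, b])} : Multiset (List α))]
    | x :: xs', y :: ys' =>
      have e1 : shuffle (xs' ++ [a]) ((y :: ys') ++ [b])
          = ((shuffle xs' ((y :: ys') ++ [b])).map (fun w => w ++ [a]))
            + ((shuffle (xs' ++ [a]) (y :: ys')).map (fun w => w ++ [b])) :=
        ih xs' (y :: ys') a b (by simp at h ⊢; omega)
      have e2 : shuffle ((x :: xs') ++ [a]) (ys' ++ [b])
          = ((shuffle (x :: xs') (ys' ++ [b])).map (fun w => w ++ [a]))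
            + ((shuffle ((x :: xs') ++ [a]) ys').map (fun w => w ++ [b])) :=
        ih (x :: xs') ys' a b (by simp at h ⊢; omega)
      simp only [List.cons_append] at e1 e2 ⊢
      rw [shuffle_cons_cons x y (xs' ++ [a]) (ys' ++ [b]), e1, e2,
        shuffle_cons_cons x y xs' (ys' ++ [b]), shuffle_cons_cons x y (xs' ++ [a]) ys']
      simp [Multiset.map_map, Function.comp, Multiset.map_add]
      abel

lemma shuffle_reverse {α : Type*} : ∀ (n : ℕ) (xs ys : List α),
    xs.length + ys.length ≤ n →
    shuffle xs.reverse ys.reverse = (shuffle xs ys).map List.reverse := by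
  intro n
  induction n with
  | zero =>
    intro xs ys h
    have hxs : xs = [] := by cases xs <;> simp_all
    have hys : ys = [] := by cases ys <;> simp_all
    subst hxs; subst hys
    simp [shuffle_nil_left]
  | succ n ih =>
    intro xs ys h
    rcases List.eq_nil_or_concat xs with hxs | ⟨xs', a, rfl⟩
    · subst hxs
      simp [shuffle_nil_left]
    rcases List.eq_nil_or_concat ys with hys | ⟨ys', b, rfl⟩
    · subst hys
      simp [shuffle_nil_right, shuffle_nil_left]
    simp only [List.concat_eq_append] at h ⊢
    rw [List.reverse_append, List.reverse_append]
    simp only [List.reverse_singleton, List.singleton_append]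
    rw [shuffle_cons_cons]
    rw [show (b :: ys'.reverse) = (ys' ++ [b]).reverse by simp,
      show (a :: xs'.reverse) = (xs' ++ [a]).reverse by simp]
    rw [ih xs' (ys' ++ [b]) (by simp at h ⊢; omega),
      ih (xs' ++ [a]) ys' (by simp at h ⊢; omega)]
    rw [shuffle_snoc (xs'.length + ys'.length) xs' ys' a b le_rfl]
    simp [Multiset.map_map, Function.comp]












/-! new stuff -/

def wfix : ℕ → List Bool → ℚ
  | a, [] => if a = 0 then 1 else 0
  | a, b :: w => if a = 0 then 0 else (if b then ∑ c ∈ Finset.range a, wfix c w else wfix a w) / a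

def rwordOf : List ℕ → List Bool
  | [] => []
  | k :: ks => List.replicate (k - 1) false ++ true :: rwordOf ks

def endsY (w : List Bool) : Prop := w = [] ∨ w.getLast? = some true

lemma wfix_nil (a : ℕ) : wfix a [] = if a = 0 then 1 else 0 := by rw [wfix]

lemma wfix_cons (a : ℕ) (b : Bool) (w : List Bool) :
    wfix a (b :: w)
      = if a = 0 then 0 else (if b then ∑ c ∈ Finset.range a, wfix c w else wfix a w) / a := by
  rw [wfix]

lemma wfix_zero_cons (b : Bool) (w : List Bool) : wfix 0 (b :: w) = 0 := by
  rw [wfix_cons]; simp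

lemma wfix_replicate (j : ℕ) (w : List Bool) (hw : w ≠ []) (a : ℕ) :
    wfix a (List.replicate j false ++ w) = wfix a w / (a : ℚ) ^ j := by
  induction j with
  | zero => simp
  | succ j ih =>
    rw [List.replicate_succ, List.cons_append, wfix_cons]
    rcases Nat.eq_zero_or_pos a with rfl | ha
    · rcases w with _ | ⟨b, w⟩
      · exact absurd rfl hw
      · simp [wfix_zero_cons]
    · rw [if_neg (by omega), if_neg (by simp), ih, pow_succ, div_div]

lemma endsY_tail {b : Bool} {w : List Bool} (h : endsY (b :: w)) : endsY w := by
  rcases w with _ | ⟨c, w⟩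
  · exact Or.inl rfl
  · rcases h with h | h
    · simp at h
    · exact Or.inr (by rw [← h, List.getLast?_cons_cons])

lemma endsY_false_ne_nil {w : List Bool} (h : endsY (false :: w)) : w ≠ [] := by
  rintro rfl
  rcases h with h | h <;> simp_all

lemma endsY_rwordOf (ks : List ℕ) : endsY (rwordOf ks) := by
  induction ks with
  | nil => exact Or.inl rfl
  | cons k ks ih =>
    right
    rw [rwordOf]
    rcases ih with h | h
    · rw [h, List.getLast?_append_of_ne_nil _ (by simp)]
      simp
    · rw [List.getLast?_append_of_ne_nil _ (by simp)]
      rcases List.exists_cons_of_ne_nil (by intro he; rw [he] at h; simp at h : rwordOf ks ≠ []) with ⟨c, t, he⟩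
      rw [he, List.getLast?_cons_cons, ← he, h]

lemma rwordOf_append (l1 l2 : List ℕ) : rwordOf (l1 ++ l2) = rwordOf l1 ++ rwordOf l2 := by
  induction l1 with
  | nil => simp [rwordOf]
  | cons k l1 ih => simp [rwordOf, ih]

lemma wordOf_cons (k : ℕ) (ks : List ℕ) :
    wordOf (k :: ks) = true :: List.replicate (k - 1) false ++ wordOf ks := rfl

lemma wordOf_reverse (ks : List ℕ) : (wordOf ks).reverse = rwordOf ks.reverse := by
  induction ks with
  | nil => rfl
  | cons k ks ih =>
    simp only [wordOf_cons, List.reverse_cons, List.reverse_append, List.reverse_replicate, ih,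
      rwordOf_append]
    simp [rwordOf]

lemma multiset_sum_swap (S : Multiset (List Bool)) (s : Finset ℕ) (g : ℕ → List Bool → ℚ) :
    ∑ k ∈ s, (S.map (g k)).sum = (S.map (fun w => ∑ k ∈ s, g k w)).sum := by
  induction S using Multiset.induction_on with
  | empty => simp
  | cons a S ih => simp [Finset.sum_add_distrib, ih]

lemma sum_tri (M : ℕ) (f : ℕ → ℕ → ℚ) :
    ∑ a ∈ Finset.range M, ∑ b ∈ Finset.range (M - a), f a b
      = ∑ k ∈ Finset.range M, ∑ a ∈ Finset.range (k + 1), f a (k - a) := by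
  induction M with
  | zero => simp
  | succ M ih =>
    rw [Finset.sum_range_succ (f := fun k => ∑ a ∈ Finset.range (k + 1), f a (k - a)), ← ih]
    have h1 : ∀ a ∈ Finset.range (M + 1),
        ∑ b ∈ Finset.range (M + 1 - a), f a b
          = (∑ b ∈ Finset.range (M - a), f a b) + f a (M - a) := by
      intro a ha
      rw [Finset.mem_range] at ha
      rw [show M + 1 - a = (M - a) + 1 by omega, Finset.sum_range_succ]
    rw [Finset.sum_congr rfl h1, Finset.sum_add_distrib,
      Finset.sum_range_succ (f := fun a => ∑ b ∈ Finset.range (M - a), f a b)]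
    simp

lemma sum_tri' (M : ℕ) (f : ℕ → ℕ → ℚ) :
    ∑ a ∈ Finset.range M, ∑ b ∈ Finset.range (M - a), f a b
      = ∑ k ∈ Finset.range M, ∑ b ∈ Finset.range (k + 1), f (k - b) b := by
  induction M with
  | zero => simp
  | succ M ih =>
    rw [Finset.sum_range_succ (f := fun k => ∑ b ∈ Finset.range (k + 1), f (k - b) b), ← ih]
    have h1 : ∀ a ∈ Finset.range (M + 1),
        ∑ b ∈ Finset.range (M + 1 - a), f a b
          = (∑ b ∈ Finset.range (M - a), f a b) + f a (M - a) := by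
      intro a ha
      rw [Finset.mem_range] at ha
      rw [show M + 1 - a = (M - a) + 1 by omega, Finset.sum_range_succ]
    rw [Finset.sum_congr rfl h1, Finset.sum_add_distrib,
      Finset.sum_range_succ (f := fun a => ∑ b ∈ Finset.range (M - a), f a b)]
    have h2 : ∑ a ∈ Finset.range (M + 1), f a (M - a)
        = ∑ b ∈ Finset.range (M + 1), f (M - b) b := by
      rw [← Finset.sum_range_reflect]
      refine Finset.sum_congr rfl ?_
      intro b hb
      rw [Finset.mem_range] at hb
      congr 1 <;> omega
    rw [h2]
    simp

lemma zetaMrev_eq : ∀ (rks : List ℕ), (∀ k ∈ rks, 0 < k) → ∀ M : ℕ, 0 < M →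
    zetaMrev M rks = ∑ c ∈ Finset.range M, wfix c (rwordOf rks) := by
  intro rks
  induction rks with
  | nil =>
    intro _ M hM
    rw [zetaMrev, rwordOf]
    rw [show (∑ c ∈ Finset.range M, wfix c ([] : List Bool))
        = ∑ c ∈ Finset.range M, if c = 0 then 1 else 0 from
      Finset.sum_congr rfl fun c _ => wfix_nil c]
    rw [Finset.sum_ite_eq' (Finset.range M) 0 (fun _ => (1 : ℚ))]
    simp [hM]
  | cons k rest ih =>
    intro hpos M hM
    have hk : 0 < k := hpos k (by simp)
    have hrest : ∀ k ∈ rest, 0 < k := fun k hk => hpos k (by simp [hk])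
    rw [zetaMrev, rwordOf]
    have h1 : ∀ c ∈ Finset.range M,
        wfix c (List.replicate (k - 1) false ++ true :: rwordOf rest)
          = if c = 0 then 0 else zetaMrev c rest / (c : ℚ) ^ k := by
      intro c _
      rw [wfix_replicate _ _ (by simp), wfix_cons]
      rcases Nat.eq_zero_or_pos c with rfl | hc
      · simp
      · rw [if_neg (by omega : ¬ c = 0), if_pos rfl, ← ih hrest c hc, div_div,
          ← pow_succ', show k - 1 + 1 = k by omega, if_neg (by omega : ¬ c = 0)]
    rw [Finset.sum_congr rfl h1, Finset.sum_ite, Finset.sum_const_zero, zero_add]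
    refine Finset.sum_congr ?_ (fun _ _ => rfl)
    ext n
    simp only [Finset.mem_filter, Finset.mem_range, Finset.mem_Ioo]
    omega

lemma lastFixed_eq (rks : List ℕ) (h : ∀ k ∈ rks, 0 < k) (a : ℕ) :
    lastFixed a rks = wfix a (rwordOf rks) := by
  rcases rks with _ | ⟨k, rest⟩
  · rw [lastFixed, rwordOf, wfix_nil]
  · have hk : 0 < k := h k (by simp)
    have hrest : ∀ k ∈ rest, 0 < k := fun k hk => h k (by simp [hk])
    rw [lastFixed, rwordOf, wfix_replicate _ _ (by simp), wfix_cons]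
    rcases Nat.eq_zero_or_pos a with rfl | ha
    · simp
    · rw [if_pos ha, if_neg (by omega : ¬ a = 0), if_pos rfl, ← zetaMrev_eq rest hrest a ha,
        div_div, ← pow_succ', show k - 1 + 1 = k by omega]

def tf : List ℕ → Bool → List ℕ :=
  fun acc b => if b then acc ++ [1] else acc.dropLast ++ [acc.getLastD 0 + 1]

lemma tf_ne_nil (acc : List ℕ) (b : Bool) : tf acc b ≠ [] := by
  rcases b <;> simp [tf]

lemma foldl_tf_shift : ∀ (w : List Bool) (ks acc : List ℕ), acc ≠ [] →
    List.foldl tf (ks ++ acc) w = ks ++ List.foldl tf acc w := by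
  intro w
  induction w with
  | nil => intro ks acc _; rfl
  | cons b w ih =>
    intro ks acc hacc
    rw [List.foldl_cons, List.foldl_cons]
    have : tf (ks ++ acc) b = ks ++ tf acc b := by
      rcases b with _ | _
      · rw [tf, tf]
        simp only [if_neg (Bool.false_ne_true)]
        rw [List.dropLast_append_of_ne_nil hacc, List.getLastD_eq_getLast?,
          List.getLastD_eq_getLast?, List.getLast?_append_of_ne_nil _ hacc, List.append_assoc]
      · simp [tf]
    rw [this, ih _ _ (tf_ne_nil acc b)]

lemma toIndex_eq_foldl (w : List Bool) : toIndex w = List.foldl tf [] w := rfl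

lemma foldl_tf_false (j : ℕ) (w : List Bool) :
    List.foldl tf [j] (false :: w) = List.foldl tf [j + 1] w := by
  rw [List.foldl_cons]
  congr 1

lemma foldl_tf_true (j : ℕ) (w : List Bool) :
    List.foldl tf [j] (true :: w) = j :: List.foldl tf [1] w := by
  rw [List.foldl_cons, show tf [j] true = [j] ++ [1] by simp [tf],
    foldl_tf_shift w [j] [1] (by simp)]
  rfl

lemma wordOf_foldl_tf : ∀ (w : List Bool) (j : ℕ), 1 ≤ j →
    wordOf (List.foldl tf [j] w) = true :: List.replicate (j - 1) false ++ w := by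
  intro w
  induction w with
  | nil =>
    intro j hj
    rw [List.foldl_nil, wordOf_cons]
    rfl
  | cons b w ih =>
    intro j hj
    rcases b with _ | _
    · rw [foldl_tf_false, ih (j + 1) (by omega)]
      rw [show j + 1 - 1 = (j - 1) + 1 by omega, List.replicate_succ']
      simp
    · rw [foldl_tf_true, wordOf_cons, ih 1 le_rfl]
      simp

lemma pos_foldl_tf : ∀ (w : List Bool) (j : ℕ), 1 ≤ j →
    ∀ k ∈ List.foldl tf [j] w, 0 < k := by
  intro w
  induction w with
  | nil => intro j hj k hk; simp at hk; omega
  | cons b w ih =>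
    intro j hj k hk
    rcases b with _ | _
    · rw [foldl_tf_false] at hk
      exact ih (j + 1) (by omega) k hk
    · rw [foldl_tf_true] at hk
      rcases List.mem_cons.mp hk with rfl | hk
      · omega
      · exact ih 1 le_rfl k hk

lemma wordOf_toIndex {w : List Bool} (h : w = [] ∨ w.head? = some true) :
    wordOf (toIndex w) = w := by
  rcases h with rfl | h
  · rfl
  · rcases w with _ | ⟨b, w⟩
    · rfl
    · simp only [List.head?_cons, Option.some_inj] at h
      subst h
      rw [toIndex_eq_foldl, List.foldl_cons, show tf [] true = [1] by simp [tf],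
        wordOf_foldl_tf w 1 le_rfl]
      rfl

lemma pos_toIndex {w : List Bool} (h : w = [] ∨ w.head? = some true) :
    ∀ k ∈ toIndex w, 0 < k := by
  rcases h with rfl | h
  · intro k hk; simp [toIndex] at hk
  · rcases w with _ | ⟨b, w⟩
    · intro k hk; simp [toIndex] at hk
    · simp only [List.head?_cons, Option.some_inj] at h
      subst h
      rw [toIndex_eq_foldl, List.foldl_cons, show tf [] true = [1] by simp [tf]]
      exact pos_foldl_tf w 1 le_rfl

def vv (a : ℕ) (d : Bool) (w : List Bool) : ℚ :=
  if d then ∑ c ∈ Finset.range a, wfix c w else wfix a w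

lemma wfix_cons_vv (a : ℕ) (b : Bool) (w : List Bool) :
    wfix a (b :: w) = if a = 0 then 0 else vv a b w / a := by
  rw [wfix_cons]; rfl

lemma vv_zero {d : Bool} {w : List Bool} (h : d = false → w ≠ []) : vv 0 d w = 0 := by
  rcases d
  · rcases w with _ | ⟨c, t⟩
    · exact absurd rfl (h rfl)
    · simp [vv, wfix_zero_cons]
  · simp [vv]

lemma key_nil_left (v : List Bool) (m : ℕ) :
    ∑ a ∈ Finset.range (m + 1), wfix a [] * wfix (m - a) v
      = ((shuffle ([] : List Bool) v).map (fun w => wfix m w)).sum := by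
  rw [shuffle_nil_left]
  have h : ∀ a ∈ Finset.range (m + 1),
      wfix a [] * wfix (m - a) v = if a = 0 then wfix m v else 0 := by
    intro a _
    rw [wfix_nil]
    rcases Nat.eq_zero_or_pos a with rfl | ha
    · simp
    · rw [if_neg (by omega : ¬ a = 0), if_neg (by omega : ¬ a = 0), zero_mul]
  rw [Finset.sum_congr rfl h, Finset.sum_ite_eq' (Finset.range (m + 1)) 0 (fun _ => wfix m v)]
  simp

lemma key_nil_right (u : List Bool) (m : ℕ) :
    ∑ a ∈ Finset.range (m + 1), wfix a u * wfix (m - a) []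
      = ((shuffle u ([] : List Bool)).map (fun w => wfix m w)).sum := by
  rw [shuffle_nil_right]
  have h : ∀ a ∈ Finset.range (m + 1),
      wfix a u * wfix (m - a) [] = if a = m then wfix a u else 0 := by
    intro a ha
    rw [Finset.mem_range] at ha
    rw [wfix_nil]
    rcases eq_or_ne a m with rfl | ham
    · rw [if_pos rfl, if_pos (by omega), mul_one]
    · rw [if_neg (by omega : ¬ m - a = 0), if_neg ham, mul_zero]
  rw [Finset.sum_congr rfl h, Finset.sum_ite_eq' (Finset.range (m + 1)) m (fun a => wfix a u)]
  simp

lemma key : ∀ (N : ℕ) (u v : List Bool), u.length + v.length ≤ N → endsY u → endsY v →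
    ∀ m : ℕ,
    ∑ a ∈ Finset.range (m + 1), wfix a u * wfix (m - a) v
      = ((shuffle u v).map (fun w => wfix m w)).sum := by
  intro N
  induction N with
  | zero =>
    intro u v h _ _ m
    have hu : u = [] := by cases u <;> simp_all
    subst hu
    exact key_nil_left v m
  | succ N ih =>
    intro u v hlen hu hv m
    rcases u with _ | ⟨d, u'⟩
    · exact key_nil_left v m
    rcases v with _ | ⟨e, v'⟩
    · exact key_nil_right (d :: u') m
    have hu' : endsY u' := endsY_tail hu
    have hv' : endsY v' := endsY_tail hv
    have hzero : ∀ (S : Multiset (List Bool)) (f : List Bool → ℚ), (∀ w, f w = 0) →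
        (S.map f).sum = 0 := by
      intro S f hf
      have : S.map f = S.map (fun _ => 0) := Multiset.map_congr rfl (fun w _ => hf w)
      rw [this]
      simp
    rcases Nat.eq_zero_or_pos m with rfl | hm
    · rw [shuffle_cons_cons, Multiset.map_add, Multiset.sum_add, Multiset.map_map,
        Multiset.map_map]
      rw [hzero _ _ (fun w => by simp [Function.comp, wfix_zero_cons]),
        hzero _ _ (fun w => by simp [Function.comp, wfix_zero_cons])]
      simp [Finset.sum_range_one, wfix_zero_cons]
    -- m > 0
    have hmQ : (m : ℚ) ≠ 0 := Nat.cast_ne_zero.mpr (by omega)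
    -- `step`: remove the head letter of the second word
    have step : ∀ (p q : List Bool) (e' : Bool), p.length + q.length ≤ N → endsY p → endsY q →
        ∀ mm : ℕ, ∑ a ∈ Finset.range (mm + 1), wfix a p * vv (mm - a) e' q
          = ((shuffle p q).map (fun w => vv mm e' w)).sum := by
      intro p q e' hpq hp hq mm
      rcases e'
      · simpa [vv] using ih p q hpq hp hq mm
      · simp only [vv, if_true]
        rw [show (∑ a ∈ Finset.range (mm + 1), wfix a p * ∑ c ∈ Finset.range (mm - a), wfix c q)
            = ∑ a ∈ Finset.range (mm + 1), ∑ c ∈ Finset.range (mm - a), wfix a p * wfix c q from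
          Finset.sum_congr rfl fun a _ => Finset.mul_sum _ _ _]
        rw [Finset.sum_range_succ, Nat.sub_self, Finset.sum_range_zero, add_zero]
        rw [sum_tri mm (fun a c => wfix a p * wfix c q)]
        rw [Finset.sum_congr rfl (fun k _ => ih p q hpq hp hq k)]
        rw [multiset_sum_swap]
    have step' : ∀ (p q : List Bool) (d' : Bool), p.length + q.length ≤ N → endsY p → endsY q →
        ∀ mm : ℕ, ∑ a ∈ Finset.range (mm + 1), vv a d' p * wfix (mm - a) q
          = ((shuffle p q).map (fun w => vv mm d' w)).sum := by
      intro p q d' hpq hp hq mm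
      rcases d'
      · simpa [vv] using ih p q hpq hp hq mm
      · simp only [vv, if_true]
        rw [show (∑ a ∈ Finset.range (mm + 1),
              (∑ c ∈ Finset.range a, wfix c p) * wfix (mm - a) q)
            = ∑ a ∈ Finset.range (mm + 1),
              ∑ c ∈ Finset.range a, wfix c p * wfix (mm - a) q from
          Finset.sum_congr rfl fun a _ => Finset.sum_mul _ _ _]
        have hrefl : (∑ a ∈ Finset.range (mm + 1),
              ∑ c ∈ Finset.range a, wfix c p * wfix (mm - a) q)
            = ∑ j ∈ Finset.range (mm + 1),
              ∑ c ∈ Finset.range (mm - j), wfix c p * wfix j q := by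
          rw [← Finset.sum_range_reflect
            (fun a => ∑ c ∈ Finset.range a, wfix c p * wfix (mm - a) q) (mm + 1)]
          refine Finset.sum_congr rfl (fun j hj => ?_)
          rw [Finset.mem_range] at hj
          rw [show mm + 1 - 1 - j = mm - j by omega]
          refine Finset.sum_congr rfl (fun c _ => ?_)
          rw [show mm - (mm - j) = j by omega]
        rw [hrefl, Finset.sum_range_succ, Nat.sub_self, Finset.sum_range_zero, add_zero]
        rw [sum_tri' mm (fun j c => wfix c p * wfix j q)]
        rw [Finset.sum_congr rfl (fun k _ => ih p q hpq hp hq k)]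
        rw [multiset_sum_swap]
    have hA : (d :: u').length + v'.length ≤ N := by simp at hlen ⊢; omega
    have hB : u'.length + (e :: v').length ≤ N := by simp at hlen ⊢; omega
    have S1 := step (d :: u') v' e hA hu hv' m
    have S2 := step' u' (e :: v') d hB hu' hv m
    have hL : ∀ a ∈ Finset.range (m + 1),
        wfix a (d :: u') * wfix (m - a) (e :: v')
          = (wfix a (d :: u') * vv (m - a) e v' + vv a d u' * wfix (m - a) (e :: v')) / m := by
      intro a ha
      rw [Finset.mem_range] at ha
      rcases Nat.eq_zero_or_pos a with rfl | hapos
      · rw [wfix_zero_cons, vv_zero (fun hd => by subst hd; exact endsY_false_ne_nil hu)]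
        simp
      rcases Nat.eq_zero_or_pos (m - a) with hb | hbpos
      · rw [hb, wfix_zero_cons, vv_zero (fun he => by subst he; exact endsY_false_ne_nil hv)]
        simp
      rw [wfix_cons_vv a, wfix_cons_vv (m - a), if_neg (by omega : ¬ a = 0),
        if_neg (by omega : ¬ m - a = 0)]
      have hcast : ((m - a : ℕ) : ℚ) = (m : ℚ) - (a : ℚ) := by
        push_cast [Nat.cast_sub (by omega : a ≤ m)]
        ring
      rw [hcast]
      have haQ : (a : ℚ) ≠ 0 := Nat.cast_ne_zero.mpr (by omega)
      have hbQ : (m : ℚ) - (a : ℚ) ≠ 0 := by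
        have : (a : ℚ) < (m : ℚ) := by exact_mod_cast (by omega : a < m)
        intro hcon
        apply absurd this
        simp
        linarith
      field_simp
      ring
    rw [Finset.sum_congr rfl hL, ← Finset.sum_div, Finset.sum_add_distrib, S1, S2]
    rw [shuffle_cons_cons, Multiset.map_add, Multiset.sum_add, Multiset.map_map, Multiset.map_map]
    have hY1 : ((shuffle u' (e :: v')).map ((fun w => wfix m w) ∘ (fun w => d :: w))).sum
        = ((shuffle u' (e :: v')).map (fun w => vv m d w)).sum * (m : ℚ)⁻¹ := by
      rw [← Multiset.sum_map_mul_right]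
      refine congrArg _ (Multiset.map_congr rfl (fun w _ => ?_))
      simp only [Function.comp]
      rw [wfix_cons_vv, if_neg (by omega : ¬ m = 0), div_eq_mul_inv]
    have hY2 : ((shuffle (d :: u') v').map ((fun w => wfix m w) ∘ (fun w => e :: w))).sum
        = ((shuffle (d :: u') v').map (fun w => vv m e w)).sum * (m : ℚ)⁻¹ := by
      rw [← Multiset.sum_map_mul_right]
      refine congrArg _ (Multiset.map_congr rfl (fun w _ => ?_))
      simp only [Function.comp]
      rw [wfix_cons_vv, if_neg (by omega : ¬ m = 0), div_eq_mul_inv]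
    rw [hY1, hY2]
    field_simp
    ring

lemma wordOf_head (ks : List ℕ) : wordOf ks = [] ∨ (wordOf ks).head? = some true := by
  rcases ks with _ | ⟨k, ks⟩
  · exact Or.inl rfl
  · right
    rw [wordOf_cons]
    rfl

lemma shuffle_head {u v : List Bool} (hu : u = [] ∨ u.head? = some true)
    (hv : v = [] ∨ v.head? = some true) :
    ∀ w ∈ shuffle u v, w = [] ∨ w.head? = some true := by
  intro w hw
  rcases u with _ | ⟨d, u'⟩
  · rw [shuffle_nil_left, Multiset.mem_singleton] at hw
    subst hw; exact hv
  rcases v with _ | ⟨e, v'⟩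
  · rw [shuffle_nil_right, Multiset.mem_singleton] at hw
    subst hw; exact hu
  have hd : d = true := by
    rcases hu with h | h
    · simp at h
    · simpa using h
  have he : e = true := by
    rcases hv with h | h
    · simp at h
    · simpa using h
  rw [shuffle_cons_cons, Multiset.mem_add] at hw
  rcases hw with hw | hw <;> rcases Multiset.mem_map.mp hw with ⟨w', _, rfl⟩
  · subst hd; right; rfl
  · subst he; right; rfl


/-- Shuffle relation for the coupled truncated sum:
`Σ_{0<m₁<⋯<m_r, 0<n₁<⋯<n_s, m_r+n_s<M} 1/(m₁^{k₁}⋯m_r^{k_r} n₁^{l₁}⋯n_s^{l_s})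
  = Z_M(z_𝐤 ⧢ z_𝐥)`. -/
theorem stmt_5 (ks ls : List ℕ) (hks : ∀ k ∈ ks, 0 < k) (hls : ∀ l ∈ ls, 0 < l)
    (M : ℕ) (hM : 0 < M) :
    (∑ a ∈ Finset.range M, ∑ b ∈ Finset.range (M - a),
        lastFixed a ks.reverse * lastFixed b ls.reverse)
      = ((shuffle (wordOf ks) (wordOf ls)).map (fun w => zetaM M (toIndex w))).sum := by
  have hksr : ∀ k ∈ ks.reverse, 0 < k := fun k hk => hks k (List.mem_reverse.mp hk)
  have hlsr : ∀ k ∈ ls.reverse, 0 < k := fun k hk => hls k (List.mem_reverse.mp hk)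
  have hLHS : (∑ a ∈ Finset.range M, ∑ b ∈ Finset.range (M - a),
        lastFixed a ks.reverse * lastFixed b ls.reverse)
      = ∑ a ∈ Finset.range M, ∑ b ∈ Finset.range (M - a),
        wfix a (rwordOf ks.reverse) * wfix b (rwordOf ls.reverse) := by
    refine Finset.sum_congr rfl (fun a _ => Finset.sum_congr rfl (fun b _ => ?_))
    rw [lastFixed_eq ks.reverse hksr, lastFixed_eq ls.reverse hlsr]
  rw [hLHS, sum_tri M (fun a b => wfix a (rwordOf ks.reverse) * wfix b (rwordOf ls.reverse))]
  rw [Finset.sum_congr rfl (fun k _ =>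
    key ((rwordOf ks.reverse).length + (rwordOf ls.reverse).length)
      (rwordOf ks.reverse) (rwordOf ls.reverse) le_rfl
      (endsY_rwordOf _) (endsY_rwordOf _) k)]
  rw [multiset_sum_swap]
  rw [← wordOf_reverse, ← wordOf_reverse,
    shuffle_reverse ((wordOf ks).length + (wordOf ls).length) (wordOf ks) (wordOf ls) le_rfl,
    Multiset.map_map]
  refine congrArg _ (Multiset.map_congr rfl (fun w hw => ?_)).symm
  have hhead : w = [] ∨ w.head? = some true :=
    shuffle_head (wordOf_head ks) (wordOf_head ls) w hw
  have hpos : ∀ k ∈ (toIndex w).reverse, 0 < k :=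
    fun k hk => pos_toIndex hhead k (List.mem_reverse.mp hk)
  rw [zetaM, zetaMrev_eq _ hpos M hM, ← wordOf_reverse, wordOf_toIndex hhead]
  rfl
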